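/- Let q ≥ 3 and n ≥ 1. If F ⊆ [q]^n is an intersecting family of words with |F| = q^{n-1}, then there exist i ∈ [n] and j ∈ [q] such that F = {w ∈ [q]^n : w(i) = j}. -/

import Mathlib

open Fin.CommRing

private lemma fin_exists_ne_ne {q : ℕ} [NeZero q] (hq : 3 ≤ q) (u v : Fin q) :
    ∃ b : Fin q, b ≠ u ∧ b ≠ v := by
  by_contra hcon
  push_neg at hcon
  have hsub : (Finset.univ : Finset (Fin q)) ⊆ {u, v} := by
    intro b _
    simp only [Finset.mem_insert, Finset.mem_singleton]
    rcases eq_or_ne b u with h | h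
    · exact Or.inl h
    · exact Or.inr (hcon b h)
  have h1 := Finset.card_le_card hsub
  have h2 : ({u, v} : Finset (Fin q)).card ≤ 2 := by
    apply le_trans (Finset.card_insert_le _ _); simp
  simp [Finset.card_univ] at h1
  omega

private lemma fin_one_ne_zero {q : ℕ} [NeZero q] (hq : 3 ≤ q) : (1 : Fin q) ≠ 0 := by
  intro h
  have h2 := congrArg Fin.val h
  rw [Fin.val_one'] at h2
  simp at h2
  omega

private lemma star_lemma {q : ℕ} [NeZero q] (hq : 3 ≤ q) :
    ∀ (m : ℕ) (c : (Fin m → Fin q) → Fin q),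
      (∀ x y, c x ≠ c y → ∃ k, x k - y k = c y - c x) →
      (∃ j, ∀ x, c x = j) ∨ ∃ i j, ∀ x, c x = j - x i := by
  intro m
  induction m with
  | zero =>
    intro c _
    refine Or.inl ⟨c (fun k => k.elim0), fun x => ?_⟩
    congr 1
    funext k
    exact k.elim0
  | succ m ih =>
    intro c h
    have key : ∀ t : Fin q, (∃ γ, ∀ x', c (Fin.snoc x' t) = γ) ∨
        ∃ i j, ∀ x', c (Fin.snoc x' t) = j - x' i := by
      intro t
      refine ih (fun x' => c (Fin.snoc x' t)) ?_
      intro x y hne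
      obtain ⟨k, hk⟩ := h (Fin.snoc x t) (Fin.snoc y t) hne
      induction k using Fin.lastCases with
      | last =>
        rw [Fin.snoc_last, Fin.snoc_last] at hk
        exact absurd (by linear_combination hk) hne
      | cast k' =>
        refine ⟨k', ?_⟩
        rw [Fin.snoc_castSucc, Fin.snoc_castSucc] at hk
        exact hk
    by_cases hconst : ∀ t : Fin q, ∃ γ, ∀ x', c (Fin.snoc x' t) = γ
    · choose γ hγ using hconst
      have hcx : ∀ x : Fin (m+1) → Fin q, c x = γ (x (Fin.last m)) := by
        intro x
        conv_lhs => rw [← Fin.snoc_init_self x]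
        exact hγ _ _
      have hσ : ∀ t s, γ t ≠ γ s → t + γ t = s + γ s := by
        intro t s hne
        obtain ⟨k, hk⟩ := h (Fin.snoc (fun _ => 0) t) (Fin.snoc (fun _ => 0) s)
          (by rw [hγ t, hγ s]; exact hne)
        rw [hγ t, hγ s] at hk
        induction k using Fin.lastCases with
        | last =>
          rw [Fin.snoc_last, Fin.snoc_last] at hk
          linear_combination hk
        | cast k' =>
          rw [Fin.snoc_castSucc, Fin.snoc_castSucc] at hk
          exact absurd (by linear_combination hk) hne
      by_cases hγc : ∀ t, γ t = γ 0
      · exact Or.inl ⟨γ 0, fun x => by rw [hcx x, hγc]⟩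
      · push_neg at hγc
        obtain ⟨t₁, ht₁⟩ := hγc
        refine Or.inr ⟨Fin.last m, 0 + γ 0, fun x => ?_⟩
        have hs : ∀ t, t + γ t = 0 + γ 0 := by
          intro t
          rcases eq_or_ne (γ t) (γ 0) with hh | hh
          · have h1 : γ t ≠ γ t₁ := by rw [hh]; exact fun e => ht₁ e.symm
            rw [hσ t t₁ h1, hσ t₁ 0 ht₁]
          · exact hσ t 0 hh
        rw [hcx x]
        linear_combination hs (x (Fin.last m))
    · push_neg at hconst
      obtain ⟨t₀, ht₀⟩ := hconst
      rcases key t₀ with ⟨γ, hγ⟩ | ⟨i, j, hij⟩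
      · obtain ⟨x', hx'⟩ := ht₀ γ
        exact absurd (hγ x') hx'
      have hall : ∀ (s : Fin q) (y' : Fin m → Fin q), c (Fin.snoc y' s) = j - y' i := by
        intro s y'
        rcases eq_or_ne s t₀ with rfl | hs
        · exact hij y'
        rcases key s with ⟨γ, hγ⟩ | ⟨i', j', hij'⟩
        · exfalso
          obtain ⟨b, hb1, hb2⟩ := fin_exists_ne_ne hq (j - γ) (j + (t₀ - s) - γ)
          have hne : c (Fin.snoc (fun _ => b) t₀) ≠ c (Fin.snoc (fun _ => b) s) := by
            rw [hij, hγ]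
            intro e
            exact hb1 (by linear_combination -e)
          obtain ⟨k, hk⟩ := h _ _ hne
          rw [hij, hγ] at hk
          induction k using Fin.lastCases with
          | last =>
            rw [Fin.snoc_last, Fin.snoc_last] at hk
            exact hb2 (by linear_combination -hk)
          | cast k' =>
            rw [Fin.snoc_castSucc, Fin.snoc_castSucc] at hk
            exact hb1 (by linear_combination -hk)
        · have hii : i' = i := by
            by_contra hii
            obtain ⟨b, hb1, hb2⟩ := fin_exists_ne_ne hq 1 (1 - (t₀ - s))
            set x' : Fin m → Fin q := fun k => if k = i then j - j' + 1 else 0 with hx'def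
            set y' : Fin m → Fin q := fun k => if k = i' then b else x' k with hy'def
            have hx'i : x' i = j - j' + 1 := by simp [hx'def]
            have hy'i' : y' i' = b := by simp [hy'def]
            have hne : c (Fin.snoc x' t₀) ≠ c (Fin.snoc y' s) := by
              rw [hij, hij', hx'i, hy'i']
              intro e
              exact hb1 (by linear_combination e)
            obtain ⟨k, hk⟩ := h _ _ hne
            rw [hij, hij', hx'i, hy'i'] at hk
            induction k using Fin.lastCases with
            | last =>
              rw [Fin.snoc_last, Fin.snoc_last] at hk
              exact hb2 (by linear_combination hk)
            | cast k' =>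
              rw [Fin.snoc_castSucc, Fin.snoc_castSucc] at hk
              rcases eq_or_ne k' i' with rfl | hk'
              · have hx0 : x' k' = 0 := by simp [hx'def, hii]
                rw [hx0, hy'i'] at hk
                exact fin_one_ne_zero hq (by linear_combination -hk)
              · have hyx : y' k' = x' k' := by simp [hy'def, hk']
                rw [hyx] at hk
                exact hb1 (by linear_combination hk)
          subst hii
          have hjj : j' = j := by
            by_contra hjj
            obtain ⟨e, he1, he2⟩ := fin_exists_ne_ne hq (j' - j) (j' - j - (t₀ - s))
            set x' : Fin m → Fin q := fun _ => (0 : Fin q) with hx'def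
            set y' : Fin m → Fin q := fun k => if k = i' then e else 0 with hy'def
            have hx'i : x' i' = 0 := rfl
            have hy'i : y' i' = e := by simp [hy'def]
            have hne : c (Fin.snoc x' t₀) ≠ c (Fin.snoc y' s) := by
              rw [hij, hij', hx'i, hy'i]
              intro hee
              exact he1 (by linear_combination hee)
            obtain ⟨k, hk⟩ := h _ _ hne
            rw [hij, hij', hx'i, hy'i] at hk
            induction k using Fin.lastCases with
            | last =>
              rw [Fin.snoc_last, Fin.snoc_last] at hk
              exact he2 (by linear_combination hk)
            | cast k' =>
              rw [Fin.snoc_castSucc, Fin.snoc_castSucc] at hk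
              rcases eq_or_ne k' i' with rfl | hk'
              · rw [hy'i] at hk
                exact hjj (by linear_combination -hk)
              · have hyx : y' k' = x' k' := by simp [hy'def, hx'def, hk']
                rw [hyx] at hk
                exact he1 (by linear_combination hk)
          subst hjj
          exact hij' y'
      refine Or.inr ⟨Fin.castSucc i, j, fun x => ?_⟩
      have h1 := hall (x (Fin.last m)) (Fin.init x)
      rw [Fin.snoc_init_self] at h1
      rw [h1]
      rfl

theorem ekr_words_uniqueness (n q : ℕ) (hq : 3 ≤ q) (hn : 1 ≤ n)
    (F : Finset (Fin n → Fin q))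
    (hint : ∀ w ∈ F, ∀ w' ∈ F, ∃ i : Fin n, w i = w' i)
    (hmax : F.card = q ^ (n - 1)) :
    ∃ (i : Fin n) (j : Fin q), F = Finset.univ.filter (fun w : Fin n → Fin q => w i = j) := by
  haveI : NeZero q := ⟨by omega⟩
  obtain ⟨m, rfl⟩ : ∃ m, n = m + 1 := ⟨n - 1, by omega⟩
  simp only [Nat.add_sub_cancel] at hmax
  have hcardF : Fintype.card ↥F = q ^ m := by rw [Fintype.card_coe, hmax]
  set Ψ : ↥F × Fin q → (Fin (m+1) → Fin q) := fun p k => (p.1 : Fin (m+1) → Fin q) k + p.2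
    with hΨdef
  have hinj : Function.Injective Ψ := by
    rintro ⟨⟨w, hw⟩, e⟩ ⟨⟨w', hw'⟩, e'⟩ hΨ
    have hfun : ∀ k, w k + e = w' k + e' := fun k => congrFun hΨ k
    obtain ⟨k₀, hk₀⟩ := hint w hw w' hw'
    have hee : e = e' := by
      have h2 := hfun k₀
      rw [hk₀] at h2
      exact add_left_cancel h2
    subst hee
    have hww : w = w' := funext fun k => add_right_cancel (hfun k)
    simp [hww]
  have hbij : Function.Bijective Ψ := by
    refine (Fintype.bijective_iff_injective_and_card Ψ).mpr ⟨hinj, ?_⟩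
    rw [Fintype.card_prod, hcardF, Fintype.card_fin, Fintype.card_fun, Fintype.card_fin,
      Fintype.card_fin, pow_succ]
  have hex : ∀ u : Fin (m+1) → Fin q, ∃ e : Fin q, (fun k => u k + e) ∈ F := by
    intro u
    obtain ⟨⟨⟨w, hw⟩, e⟩, hwe⟩ := hbij.2 u
    refine ⟨-e, ?_⟩
    have hwu : (fun k => u k + -e) = w := funext fun k => by
      have h2 := congrFun hwe k
      linear_combination -h2
    rw [hwu]; exact hw
  have huniq : ∀ (u : Fin (m+1) → Fin q) (e e' : Fin q),
      (fun k => u k + e) ∈ F → (fun k => u k + e') ∈ F → e = e' := by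
    intro u e e' h1 h2
    obtain ⟨k, hk⟩ := hint _ h1 _ h2
    have hk2 : u k + e = u k + e' := hk
    exact add_left_cancel hk2
  choose c hc using fun x : Fin m → Fin q => hex (Fin.snoc x (0 : Fin q))
  have hrecon : ∀ w : Fin (m+1) → Fin q,
      c (fun k => w (Fin.castSucc k) - w (Fin.last m)) = w (Fin.last m) → w ∈ F := by
    intro w hcw
    have heq : (fun k => (Fin.snoc (fun k => w (Fin.castSucc k) - w (Fin.last m)) (0 : Fin q)
        : Fin (m+1) → Fin q) k
        + c (fun k => w (Fin.castSucc k) - w (Fin.last m))) = w := by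
      funext k
      rw [hcw]
      induction k using Fin.lastCases with
      | last => rw [Fin.snoc_last]; ring
      | cast k' => rw [Fin.snoc_castSucc]; ring
    rw [← heq]
    exact hc _
  have hlastF : ∀ w ∈ F, c (fun k => w (Fin.castSucc k) - w (Fin.last m)) = w (Fin.last m) := by
    intro w hw
    set x : Fin m → Fin q := fun k => w (Fin.castSucc k) - w (Fin.last m) with hxdef
    have h1 : (fun k => (Fin.snoc x (0 : Fin q) : Fin (m+1) → Fin q) k + w (Fin.last m)) ∈ F := by
      have heq : (fun k => (Fin.snoc x (0 : Fin q) : Fin (m+1) → Fin q) k + w (Fin.last m)) = w := by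
        funext k
        induction k using Fin.lastCases with
        | last => rw [Fin.snoc_last]; ring
        | cast k' => rw [Fin.snoc_castSucc, hxdef]; ring
      rw [heq]; exact hw
    exact huniq _ _ _ (hc x) h1
  have hstar : ∀ x y, c x ≠ c y → ∃ k, x k - y k = c y - c x := by
    intro x y hne
    obtain ⟨k, hk⟩ := hint _ (hc x) _ (hc y)
    have hk2 : (Fin.snoc x (0 : Fin q) : Fin (m+1) → Fin q) k + c x
        = (Fin.snoc y (0 : Fin q) : Fin (m+1) → Fin q) k + c y := hk
    induction k using Fin.lastCases with
    | last =>
      rw [Fin.snoc_last, Fin.snoc_last] at hk2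
      exact absurd (by linear_combination hk2) hne
    | cast k' =>
      refine ⟨k', ?_⟩
      rw [Fin.snoc_castSucc, Fin.snoc_castSucc] at hk2
      linear_combination hk2
  rcases star_lemma hq m c hstar with ⟨j, hj⟩ | ⟨i, j, hij⟩
  · refine ⟨Fin.last m, j, ?_⟩
    ext w
    simp only [Finset.mem_filter, Finset.mem_univ, true_and]
    constructor
    · intro hw
      rw [← hlastF w hw, hj]
    · intro hw
      exact hrecon w (by rw [hj, hw])
  · refine ⟨Fin.castSucc i, j, ?_⟩
    ext w
    simp only [Finset.mem_filter, Finset.mem_univ, true_and]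
    constructor
    · intro hw
      have h1 := hlastF w hw
      rw [hij] at h1
      linear_combination -h1
    · intro hw
      refine hrecon w ?_
      rw [hij]
      show j - (w (Fin.castSucc i) - w (Fin.last m)) = w (Fin.last m)
      rw [hw]; ring
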